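/- arXiv:1204.2086 — 2 statements merged into one kernel-verified Lean document; each statement's English description precedes it below -/
import Mathlib

section
/- Let p, q > 1 with 1/p + 1/q = 1, and let u, v ∈ L¹(ℝ) be nonnegative. For t > 0 set u(·,t) = u * M_{2t} and v(·,t) = v * M_{2t}. Then the functional Φ_{u,v}(t) = ∫_ℝ u(x,t)^{1/p} v(x,t)^{1/q} dx converges, as t → ∞, to (∫_ℝ u(x) dx)^{1/p} (∫_ℝ v(x) dx)^{1/q}. -/
open MeasureTheory Real Filter
open scoped ENNReal

/-- The centered Gaussian density on `ℝ` with variance `s`. -/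
noncomputable def gauss (s : ℝ) : ℝ → ℝ :=
  fun x => (2 * Real.pi * s) ^ (-(1:ℝ)/2) * Real.exp (-x ^ 2 / (2 * s))

lemma gauss_nonneg {s : ℝ} (hs : 0 < s) (x : ℝ) : 0 ≤ gauss s x := by
  unfold gauss
  positivity

lemma gauss_pos {s : ℝ} (hs : 0 < s) (x : ℝ) : 0 < gauss s x := by
  unfold gauss
  positivity

lemma gauss_eq {s : ℝ} (hs : 0 < s) (x : ℝ) :
    gauss s x = (2 * Real.pi * s) ^ (-(1:ℝ)/2) * Real.exp (-(1/(2*s)) * x ^ 2) := by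
  unfold gauss; ring_nf

lemma gauss_integrable {s : ℝ} (hs : 0 < s) : Integrable (gauss s) := by
  have h : Integrable (fun x : ℝ => Real.exp (-(1/(2*s)) * x ^ 2)) :=
    integrable_exp_neg_mul_sq (by positivity)
  have := h.const_mul ((2 * Real.pi * s) ^ (-(1:ℝ)/2))
  apply this.congr
  filter_upwards with x
  rw [gauss_eq hs]

lemma gauss_integral {s : ℝ} (hs : 0 < s) : ∫ x, gauss s x = 1 := by
  have h1 : ∫ x : ℝ, Real.exp (-(1/(2*s)) * x ^ 2) = Real.sqrt (π / (1/(2*s))) :=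
    integral_gaussian (1/(2*s))
  have : ∫ x, gauss s x = (2 * Real.pi * s) ^ (-(1:ℝ)/2) * Real.sqrt (π / (1/(2*s))) := by
    rw [← h1, ← integral_const_mul]
    congr 1; ext x; rw [gauss_eq hs]
  rw [this]
  have h2 : π / (1/(2*s)) = 2 * π * s := by field_simp
  rw [h2, Real.sqrt_eq_rpow, ← Real.rpow_add (by positivity)]
  norm_num

/-- `heatSol w t = w * M_{2t}`, the solution at time `t` of the heat equation
`w_t = w_xx` with initial datum `w`. -/
noncomputable def heatSol (w : ℝ → ℝ) (t : ℝ) : ℝ → ℝ :=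
  fun x => ∫ y, w (x - y) * gauss (2 * t) y

lemma heatSol_eq_conv (w : ℝ → ℝ) (t : ℝ) :
    heatSol w t = convolution (gauss (2*t)) w (ContinuousLinearMap.mul ℝ ℝ) volume := by
  ext x
  rw [convolution_def]
  unfold heatSol
  simp only [ContinuousLinearMap.mul_apply']
  congr 1; ext y; ring

lemma heatSol_integrable {w : ℝ → ℝ} (hw : Integrable w) {t : ℝ} (ht : 0 < t) :
    Integrable (heatSol w t) := by
  rw [heatSol_eq_conv]
  exact (gauss_integrable (by positivity)).integrable_convolution _ hw

lemma heatSol_integral {w : ℝ → ℝ} (hw : Integrable w) {t : ℝ} (ht : 0 < t) :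
    ∫ x, heatSol w t x = ∫ x, w x := by
  rw [heatSol_eq_conv]
  rw [integral_convolution _ (gauss_integrable (by positivity)) hw]
  rw [gauss_integral (by positivity)]
  simp

lemma heatSol_nonneg {w : ℝ → ℝ} (hw : ∀ x, 0 ≤ w x) {t : ℝ} (ht : 0 < t) (x : ℝ) :
    0 ≤ heatSol w t x := by
  unfold heatSol
  apply integral_nonneg
  intro y
  exact mul_nonneg (hw _) (gauss_nonneg (by positivity) _)

lemma gauss_continuous {s : ℝ} : Continuous (gauss s) := by
  unfold gauss
  fun_prop

lemma scaled_kernel {t : ℝ} (ht : 0 < t) (a : ℝ) :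
    Real.sqrt t * gauss (2*t) a
      = (2 * π * 2) ^ (-(1:ℝ)/2) * Real.exp (-(a / Real.sqrt t)^2 / 4) := by
  have hst : (0:ℝ) < Real.sqrt t := Real.sqrt_pos.mpr ht
  have h1 : (2 * π * (2*t)) = (2*π*2) * t := by ring
  unfold gauss
  rw [h1, Real.mul_rpow (by positivity) ht.le]
  have h2 : Real.sqrt t * ((2*π*2) ^ (-(1:ℝ)/2) * t ^ (-(1:ℝ)/2)) = (2*π*2) ^ (-(1:ℝ)/2) := by
    rw [Real.sqrt_eq_rpow]
    rw [mul_comm ((2*π*2) ^ (-(1:ℝ)/2)), ← mul_assoc, ← Real.rpow_add ht]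
    norm_num
  have h3 : -a ^ 2 / (2 * (2*t)) = -(a / Real.sqrt t)^2 / 4 := by
    rw [div_pow, Real.sq_sqrt ht.le, show -(a^2/t) = -a^2/t by ring, div_div,
      show t*4 = 2*(2*t) by ring]
  rw [← mul_assoc, h2, h3]

lemma sqrt_tendsto_atTop : Tendsto Real.sqrt atTop atTop := by
  apply Tendsto.congr' _ (tendsto_rpow_atTop (by norm_num : (0:ℝ) < 1/2))
  filter_upwards [eventually_ge_atTop (0:ℝ)] with x hx
  rw [Real.sqrt_eq_rpow]

lemma kernel_tendsto (z : ℝ) (tn : ℕ → ℝ) (htn : Tendsto tn atTop atTop) (w : ℝ) :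
    Tendsto (fun n => Real.sqrt (tn n) * gauss (2 * tn n) (Real.sqrt (tn n) * z - w))
      atTop (nhds (gauss 2 z)) := by
  have hev : ∀ᶠ n in atTop, (0:ℝ) < tn n := htn.eventually_gt_atTop 0
  have hlim : Tendsto (fun n => z - w / Real.sqrt (tn n)) atTop (nhds z) := by
    have h1 : Tendsto (fun n => Real.sqrt (tn n)) atTop atTop :=
      sqrt_tendsto_atTop.comp htn
    have h2 : Tendsto (fun n => w / Real.sqrt (tn n)) atTop (nhds 0) :=
      Tendsto.div_atTop tendsto_const_nhds h1
    simpa using tendsto_const_nhds.sub h2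
  have key : Tendsto (fun n => (2 * π * 2) ^ (-(1:ℝ)/2)
      * Real.exp (-(z - w / Real.sqrt (tn n))^2 / 4)) atTop (nhds (gauss 2 z)) := by
    have hcont : Continuous fun x : ℝ => (2 * π * 2) ^ (-(1:ℝ)/2) * Real.exp (-x^2 / 4) := by
      fun_prop
    have := (hcont.tendsto z).comp hlim
    convert this using 2
    all_goals (try unfold gauss)
    all_goals norm_num
  apply key.congr'
  filter_upwards [hev] with n hn
  rw [scaled_kernel hn]
  congr 2
  have hst : Real.sqrt (tn n) ≠ 0 := (Real.sqrt_pos.mpr hn).ne'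
  field_simp

lemma heatSol_scaled_eq {w : ℝ → ℝ} {t : ℝ} (ht : 0 < t) (z : ℝ) :
    Real.sqrt t * heatSol w t (Real.sqrt t * z)
      = ∫ y, w y * (Real.sqrt t * gauss (2*t) (Real.sqrt t * z - y)) := by
  unfold heatSol
  have h1 : (∫ y, w (Real.sqrt t * z - y) * gauss (2 * t) y)
      = ∫ y, w y * gauss (2*t) (Real.sqrt t * z - y) := by
    rw [← MeasureTheory.integral_sub_left_eq_self
      (fun y => w y * gauss (2*t) (Real.sqrt t * z - y)) volume (Real.sqrt t * z)]
    congr 1; ext y; simp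
  rw [h1, ← integral_const_mul]
  congr 1; ext y; ring

lemma heatSol_scaled_tendsto {w : ℝ → ℝ} (hw : Integrable w) (hw0 : ∀ x, 0 ≤ w x)
    (tn : ℕ → ℝ) (htn : Tendsto tn atTop atTop) (z : ℝ) :
    Tendsto (fun n => Real.sqrt (tn n) * heatSol w (tn n) (Real.sqrt (tn n) * z))
      atTop (nhds ((∫ x, w x) * gauss 2 z)) := by
  have hev : ∀ᶠ n in atTop, (0:ℝ) < tn n := htn.eventually_gt_atTop 0
  have key : Tendsto (fun n => ∫ y, w y *
      (Real.sqrt (tn n) * gauss (2 * tn n) (Real.sqrt (tn n) * z - y)))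
      atTop (nhds (∫ y, w y * gauss 2 z)) := by
    apply tendsto_integral_filter_of_dominated_convergence
      (fun y => w y * (2 * π * 2) ^ (-(1:ℝ)/2))
    · filter_upwards [hev] with n hn
      exact hw.aestronglyMeasurable.mul
        ((continuous_const.mul (gauss_continuous.comp
          (continuous_const.sub continuous_id))).aestronglyMeasurable)
    · filter_upwards [hev] with n hn
      filter_upwards with y
      rw [norm_mul, Real.norm_of_nonneg (hw0 y), scaled_kernel hn]
      rw [Real.norm_of_nonneg (by positivity)]
      apply mul_le_mul_of_nonneg_left _ (hw0 y)
      rw [mul_comm]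
      apply mul_le_of_le_one_left (by positivity)
      apply Real.exp_le_one_iff.mpr
      have : (0:ℝ) ≤ ((Real.sqrt (tn n) * z - y) / Real.sqrt (tn n))^2 := sq_nonneg _
      linarith
    · exact hw.mul_const _
    · filter_upwards with y
      exact (kernel_tendsto z tn htn y).const_mul (w y)
  have h2 : (∫ y, w y * gauss 2 z) = (∫ x, w x) * gauss 2 z := by
    rw [integral_mul_const]
  rw [h2] at key
  apply key.congr'
  filter_upwards [hev] with n hn
  rw [heatSol_scaled_eq hn]

lemma holder_bound {f g : ℝ → ℝ} (hf : Integrable f) (hg : Integrable g)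
    (hf0 : ∀ x, 0 ≤ f x) (hg0 : ∀ x, 0 ≤ g x) {p q : ℝ} (hp : 1 < p) (hq : 1 < q)
    (hpq : 1/p + 1/q = 1) :
    ∫⁻ x, ENNReal.ofReal (f x ^ (1/p) * g x ^ (1/q))
      ≤ ENNReal.ofReal ((∫ x, f x) ^ (1/p) * (∫ x, g x) ^ (1/q)) := by
  have hp0 : (0:ℝ) ≤ 1/p := by positivity
  have hq0 : (0:ℝ) ≤ 1/q := by positivity
  have hconj : Real.HolderConjugate p q := Real.holderConjugate_iff.mpr ⟨hp, by rw [inv_eq_one_div, inv_eq_one_div]; exact hpq⟩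
  have hFmeas : AEMeasurable (fun x => ENNReal.ofReal (f x) ^ (1/p)) volume :=
    (hf.aemeasurable.ennreal_ofReal).pow_const _
  have hGmeas : AEMeasurable (fun x => ENNReal.ofReal (g x) ^ (1/q)) volume :=
    (hg.aemeasurable.ennreal_ofReal).pow_const _
  have key := ENNReal.lintegral_mul_le_Lp_mul_Lq volume hconj hFmeas hGmeas
  have e1 : ∀ x, ENNReal.ofReal (f x ^ (1/p) * g x ^ (1/q))
      = ENNReal.ofReal (f x) ^ (1/p) * ENNReal.ofReal (g x) ^ (1/q) := by
    intro x
    rw [ENNReal.ofReal_mul (Real.rpow_nonneg (hf0 x) _), ENNReal.ofReal_rpow_of_nonneg (hf0 x) hp0,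
      ENNReal.ofReal_rpow_of_nonneg (hg0 x) hq0]
  have e2 : ∀ (a : ℝ≥0∞), (a ^ (1/p)) ^ p = a := fun a => by
    rw [← ENNReal.rpow_mul, one_div_mul_cancel (by linarith : p ≠ 0), ENNReal.rpow_one]
  have e3 : ∀ (a : ℝ≥0∞), (a ^ (1/q)) ^ q = a := fun a => by
    rw [← ENNReal.rpow_mul, one_div_mul_cancel (by linarith : q ≠ 0), ENNReal.rpow_one]
  simp only [Pi.mul_apply, e2, e3] at key
  have eF : ∫⁻ x, ENNReal.ofReal (f x) = ENNReal.ofReal (∫ x, f x) :=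
    (MeasureTheory.ofReal_integral_eq_lintegral_ofReal hf
      (Eventually.of_forall hf0)).symm
  have eG : ∫⁻ x, ENNReal.ofReal (g x) = ENNReal.ofReal (∫ x, g x) :=
    (MeasureTheory.ofReal_integral_eq_lintegral_ofReal hg
      (Eventually.of_forall hg0)).symm
  rw [eF, eG] at key
  calc ∫⁻ x, ENNReal.ofReal (f x ^ (1/p) * g x ^ (1/q))
      = ∫⁻ x, ENNReal.ofReal (f x) ^ (1/p) * ENNReal.ofReal (g x) ^ (1/q) := by
        simp only [e1]
    _ ≤ ENNReal.ofReal (∫ x, f x) ^ (1/p) * ENNReal.ofReal (∫ x, g x) ^ (1/q) := key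
    _ = ENNReal.ofReal ((∫ x, f x) ^ (1/p) * (∫ x, g x) ^ (1/q)) := by
        rw [ENNReal.ofReal_mul (Real.rpow_nonneg (integral_nonneg hf0) _),
          ENNReal.ofReal_rpow_of_nonneg (integral_nonneg hf0) hp0,
          ENNReal.ofReal_rpow_of_nonneg (integral_nonneg hg0) hq0]

lemma rpow_split {p q t a b : ℝ} (hp : 1 < p) (hq : 1 < q) (hpq : 1/p + 1/q = 1)
    (ht : 0 < t) (ha : 0 ≤ a) (hb : 0 ≤ b) :
    t * (a ^ (1/p) * b ^ (1/q)) = (t * a) ^ (1/p) * (t * b) ^ (1/q) := by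
  rw [Real.mul_rpow ht.le ha, Real.mul_rpow ht.le hb,
    show t ^ (1/p) * a ^ (1/p) * (t ^ (1/q) * b ^ (1/q))
      = (t ^ (1/p) * t ^ (1/q)) * (a ^ (1/p) * b ^ (1/q)) by ring,
    ← Real.rpow_add ht, hpq, Real.rpow_one]

/-- As `t → ∞`, `Φ_{u,v}(t) = ∫ u(x,t)^{1/p} v(x,t)^{1/q} dx` converges to
`(∫ u)^{1/p} (∫ v)^{1/q}`. -/
theorem holder_functional_limit (p q : ℝ) (hp : 1 < p) (hq : 1 < q)
    (hpq : 1/p + 1/q = 1) (u v : ℝ → ℝ)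
    (hu : Integrable u) (hv : Integrable v)
    (hu0 : ∀ x, 0 ≤ u x) (hv0 : ∀ x, 0 ≤ v x) :
    Tendsto (fun t => ∫ x, heatSol u t x ^ (1/p) * heatSol v t x ^ (1/q)) atTop
      (nhds ((∫ x, u x) ^ (1/p) * (∫ x, v x) ^ (1/q))) := by
  have hp0 : (0:ℝ) ≤ 1/p := by positivity
  have hq0 : (0:ℝ) ≤ 1/q := by positivity
  set A := ∫ x, u x with hA
  set B := ∫ x, v x with hB
  set L := A ^ (1/p) * B ^ (1/q) with hL
  have hA0 : 0 ≤ A := integral_nonneg hu0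
  have hB0 : 0 ≤ B := integral_nonneg hv0
  have hL0 : 0 ≤ L := mul_nonneg (Real.rpow_nonneg hA0 _) (Real.rpow_nonneg hB0 _)
  rw [tendsto_iff_seq_tendsto]
  intro s0 hs0
  -- replace s0 by a positive sequence
  set s : ℕ → ℝ := fun n => max (s0 n) 1 with hsdef
  have hs : Tendsto s atTop atTop :=
    tendsto_atTop_mono (fun n => le_max_left _ _) hs0
  have hpos : ∀ n, (0:ℝ) < s n := fun n => lt_of_lt_of_le one_pos (le_max_right _ _)
  have heqv : ∀ᶠ n in atTop, s0 n = s n := by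
    filter_upwards [hs0.eventually_ge_atTop 1] with n hn
    simp [hsdef, max_eq_left hn]
  suffices h : Tendsto (fun n => ∫ x, heatSol u (s n) x ^ (1/p) * heatSol v (s n) x ^ (1/q))
      atTop (nhds L) by
    apply h.congr'
    filter_upwards [heqv] with n hn
    simp only [Function.comp_apply, hn]
  -- notation
  set φ : ℕ → ℝ → ℝ := fun n x => heatSol u (s n) x ^ (1/p) * heatSol v (s n) x ^ (1/q) with hφdef
  have hui : ∀ n, Integrable (heatSol u (s n)) := fun n => heatSol_integrable hu (hpos n)
  have hvi : ∀ n, Integrable (heatSol v (s n)) := fun n => heatSol_integrable hv (hpos n)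
  have hu0' : ∀ n x, 0 ≤ heatSol u (s n) x := fun n => heatSol_nonneg hu0 (hpos n)
  have hv0' : ∀ n x, 0 ≤ heatSol v (s n) x := fun n => heatSol_nonneg hv0 (hpos n)
  have hφ0 : ∀ n x, 0 ≤ φ n x := fun n x =>
    mul_nonneg (Real.rpow_nonneg (hu0' n x) _) (Real.rpow_nonneg (hv0' n x) _)
  have hΨle : ∀ n, ∫⁻ x, ENNReal.ofReal (φ n x) ≤ ENNReal.ofReal L := by
    intro n
    have h := holder_bound (hui n) (hvi n) (hu0' n) (hv0' n) hp hq hpq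
    rwa [heatSol_integral hu (hpos n), heatSol_integral hv (hpos n), ← hA, ← hB, ← hL] at h
  have hφmeas : ∀ n, AEStronglyMeasurable (φ n) volume := fun n =>
    (((hui n).aemeasurable.pow_const _).mul ((hvi n).aemeasurable.pow_const _)).aestronglyMeasurable
  have hφint : ∀ n, Integrable (φ n) := by
    intro n
    refine ⟨hφmeas n, ?_⟩
    rw [hasFiniteIntegral_iff_ofReal (Eventually.of_forall (hφ0 n))]
    exact lt_of_le_of_lt (hΨle n) ENNReal.ofReal_lt_top
  -- scaled functions
  set h : ℕ → ℝ → ℝ := fun n z => Real.sqrt (s n) * φ n (Real.sqrt (s n) * z) with hhdef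
  have hsqpos : ∀ n, (0:ℝ) < Real.sqrt (s n) := fun n => Real.sqrt_pos.mpr (hpos n)
  have hsub : ∀ n, ∫ x, φ n x = ∫ z, h n z := by
    intro n
    rw [hhdef]
    simp only
    rw [integral_const_mul, Measure.integral_comp_mul_left (φ n) (Real.sqrt (s n)),
      abs_of_pos (inv_pos.mpr (hsqpos n)), smul_eq_mul, ← mul_assoc,
      mul_inv_cancel₀ (hsqpos n).ne', one_mul]
  have hhint : ∀ n, Integrable (h n) := fun n =>
    (((hφint n).comp_mul_left' (hsqpos n).ne')).const_mul _
  have hΨeq : ∀ n, ∫⁻ x, ENNReal.ofReal (φ n x) = ∫⁻ z, ENNReal.ofReal (h n z) := by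
    intro n
    rw [← MeasureTheory.ofReal_integral_eq_lintegral_ofReal (hφint n)
        (Eventually.of_forall (hφ0 n)),
      ← MeasureTheory.ofReal_integral_eq_lintegral_ofReal (hhint n)
        (Eventually.of_forall (fun z => mul_nonneg (hsqpos n).le (hφ0 n _))),
      hsub n]
  -- pointwise limit of h
  have hhlim : ∀ z, Tendsto (fun n => h n z) atTop (nhds (L * gauss 2 z)) := by
    intro z
    have Hf := heatSol_scaled_tendsto hu hu0 s hs z
    have Hg := heatSol_scaled_tendsto hv hv0 s hs z
    have Hf' : Tendsto (fun n => (Real.sqrt (s n) * heatSol u (s n) (Real.sqrt (s n) * z)) ^ (1/p))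
        atTop (nhds ((A * gauss 2 z) ^ (1/p))) :=
      ((Real.continuousAt_rpow_const _ _ (Or.inr hp0)).tendsto).comp Hf
    have Hg' : Tendsto (fun n => (Real.sqrt (s n) * heatSol v (s n) (Real.sqrt (s n) * z)) ^ (1/q))
        atTop (nhds ((B * gauss 2 z) ^ (1/q))) :=
      ((Real.continuousAt_rpow_const _ _ (Or.inr hq0)).tendsto).comp Hg
    have Hmul := Hf'.mul Hg'
    have hval : (A * gauss 2 z) ^ (1/p) * (B * gauss 2 z) ^ (1/q) = L * gauss 2 z := by
      rw [Real.mul_rpow hA0 (gauss_nonneg two_pos z), Real.mul_rpow hB0 (gauss_nonneg two_pos z),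
        show A ^ (1/p) * gauss 2 z ^ (1/p) * (B ^ (1/q) * gauss 2 z ^ (1/q))
          = (A ^ (1/p) * B ^ (1/q)) * (gauss 2 z ^ (1/p) * gauss 2 z ^ (1/q)) by ring,
        ← Real.rpow_add (gauss_pos two_pos z), hpq, Real.rpow_one, hL]
    rw [hval] at Hmul
    apply Hmul.congr
    intro n
    rw [hhdef]
    simp only [hφdef]
    rw [rpow_split hp hq hpq (hsqpos n) (hu0' n _) (hv0' n _)]
  -- Fatou
  have hhmeas : ∀ n, AEMeasurable (fun z => ENNReal.ofReal (h n z)) volume := fun n =>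
    (hhint n).aemeasurable.ennreal_ofReal
  have fatou := MeasureTheory.lintegral_liminf_le' (u := atTop) hhmeas
  have hliminfpt : ∀ z, Filter.liminf (fun n => ENNReal.ofReal (h n z)) atTop
      = ENNReal.ofReal (L * gauss 2 z) := fun z =>
    ((ENNReal.continuous_ofReal.tendsto _).comp (hhlim z)).liminf_eq
  have hLint : ∫⁻ z, ENNReal.ofReal (L * gauss 2 z) = ENNReal.ofReal L := by
    rw [← MeasureTheory.ofReal_integral_eq_lintegral_ofReal
        ((gauss_integrable two_pos).const_mul L)
        (Eventually.of_forall (fun z => mul_nonneg hL0 (gauss_nonneg two_pos z))),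
      integral_const_mul, gauss_integral two_pos, mul_one]
  have hge : ENNReal.ofReal L ≤ liminf (fun n => ∫⁻ x, ENNReal.ofReal (φ n x)) atTop := by
    calc ENNReal.ofReal L = ∫⁻ z, ENNReal.ofReal (L * gauss 2 z) := hLint.symm
      _ = ∫⁻ z, liminf (fun n => ENNReal.ofReal (h n z)) atTop := by
          congr 1; ext z; rw [hliminfpt z]
      _ ≤ liminf (fun n => ∫⁻ z, ENNReal.ofReal (h n z)) atTop := fatou
      _ = liminf (fun n => ∫⁻ x, ENNReal.ofReal (φ n x)) atTop := by
          apply liminf_congr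
          filter_upwards with n
          rw [hΨeq n]
  have hΨtendsto : Tendsto (fun n => ∫⁻ x, ENNReal.ofReal (φ n x)) atTop
      (nhds (ENNReal.ofReal L)) := by
    apply tendsto_of_le_liminf_of_limsup_le hge
    apply limsup_le_of_le
    · isBoundedDefault
    · exact Eventually.of_forall hΨle
  have hfinal : Tendsto (fun n => (∫⁻ x, ENNReal.ofReal (φ n x)).toReal) atTop (nhds L) := by
    have := (ENNReal.tendsto_toReal (ENNReal.ofReal_ne_top)).comp hΨtendsto
    rwa [ENNReal.toReal_ofReal hL0] at this
  apply hfinal.congr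
  intro n
  rw [MeasureTheory.integral_eq_lintegral_of_nonneg_ae (Eventually.of_forall (hφ0 n)) (hφmeas n)]
end

section
/- Let p, q, r > 1 satisfy 1/p + 1/q = 1 + 1/r, and let p', q', r' denote the dual exponents. Then C(p,q,r) = ( ∫_ℝ ( (M_{q'/p})^{1/p} * (M_{p'/q})^{1/q} )(x)^r dx )^{1/r} = A_p A_q A_{r'}, where A_m = (m^{1/m}/m'^{1/m'})^{1/2}. -/
open MeasureTheory Real

/-- Convolution on `ℝ`. -/
noncomputable def conv (f g : ℝ → ℝ) : ℝ → ℝ := fun x => ∫ y, f (x - y) * g y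

/-- The constant `A_m = (m^{1/m}/m'^{1/m'})^{1/2}`, where `m'` is the dual exponent. -/
noncomputable def sharpA (m m' : ℝ) : ℝ := (m ^ (1/m) / m' ^ (1/m')) ^ ((1:ℝ)/2)

lemma gaussian_conv (a b : ℝ) (ha : 0 < a) (hb : 0 < b) (x : ℝ) :
    ∫ y : ℝ, Real.exp (-(x - y)^2 / (2*a)) * Real.exp (-y^2 / (2*b)) =
      Real.sqrt (2*π*a*b/(a+b)) * Real.exp (-x^2 / (2*(a+b))) := by
  set c := (a+b)/(2*a*b) with hcdef
  set m := b*x/(a+b) with hmdef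
  have hab : 0 < a + b := by linarith
  have hc : 0 < c := by positivity
  have key : ∀ y : ℝ, Real.exp (-(x - y)^2 / (2*a)) * Real.exp (-y^2 / (2*b)) =
      Real.exp (-c * (y - m)^2) * Real.exp (-x^2 / (2*(a+b))) := by
    intro y
    rw [← Real.exp_add, ← Real.exp_add]
    congr 1
    rw [hcdef, hmdef]
    field_simp
    ring
  simp only [key]
  rw [integral_mul_const]
  have h1 : ∫ y : ℝ, Real.exp (-c * (y - m)^2) = ∫ y : ℝ, Real.exp (-c * y^2) :=
    integral_sub_right_eq_self (fun y => Real.exp (-c * y^2)) m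
  rw [h1, integral_gaussian]
  congr 2
  rw [hcdef, div_div_eq_mul_div]
  ring

lemma gauss_rpow (s t : ℝ) (hs : 0 < s) (_ht : 0 < t) (y : ℝ) :
    gauss s y ^ ((1:ℝ)/t) = (2*π*s) ^ (-(1:ℝ)/(2*t)) * Real.exp (-y^2 / (2*s*t)) := by
  have h2πs : (0:ℝ) < 2*π*s := by positivity
  unfold gauss
  rw [Real.mul_rpow (Real.rpow_nonneg h2πs.le _) (Real.exp_pos _).le,
      ← Real.rpow_mul h2πs.le, ← Real.exp_mul]
  congr 1
  · ring_nf
  · rw [div_mul_eq_mul_div, mul_one_div, div_div, mul_comm t (2*s)]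

/-- `C(p,q,r) = ( ∫ (M_{q'/p}^{1/p} * M_{p'/q}^{1/q})^r )^{1/r} = A_p A_q A_{r'}`
(the dual exponent of `r'` being `r` itself). -/
theorem gaussian_const_eq_sharp_young_const (p q r p' q' r' : ℝ)
    (hp : 1 < p) (hq : 1 < q) (hr : 1 < r)
    (hpqr : 1/p + 1/q = 1 + 1/r)
    (hp' : 1/p + 1/p' = 1) (hq' : 1/q + 1/q' = 1) (hr' : 1/r + 1/r' = 1) :
    (∫ x, conv (fun y => gauss (q'/p) y ^ (1/p))
        (fun y => gauss (p'/q) y ^ (1/q)) x ^ r) ^ (1/r) =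
      sharpA p p' * sharpA q q' * sharpA r' r := by
  have hπ : (0:ℝ) < π := Real.pi_pos
  have hp0 : (0:ℝ) < p := lt_trans one_pos hp
  have hq0 : (0:ℝ) < q := lt_trans one_pos hq
  have hr0 : (0:ℝ) < r := lt_trans one_pos hr
  have hp'0 : (0:ℝ) < p' := by
    have h1 : 1/p < 1 := (div_lt_one hp0).mpr hp
    have : 0 < 1/p' := by linarith
    exact one_div_pos.mp this
  have hq'0 : (0:ℝ) < q' := by
    have h1 : 1/q < 1 := (div_lt_one hq0).mpr hq
    have : 0 < 1/q' := by linarith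
    exact one_div_pos.mp this
  have hr'0 : (0:ℝ) < r' := by
    have h1 : 1/r < 1 := (div_lt_one hr0).mpr hr
    have : 0 < 1/r' := by linarith
    exact one_div_pos.mp this
  have e1 : 1/q' = 1/p - 1/r := by linarith
  have e2 : 1/p' = 1/q - 1/r := by linarith
  have e3 : 1/r' = 1 - 1/r := by linarith
  have hsum : 1/p' + 1/q' = 1/r' := by linarith
  have hseq : q' + p' = p' * q' / r' := by
    rw [eq_div_iff hr'0.ne']
    field_simp at hsum
    linear_combination hsum
  have hsge : (0:ℝ) < q' + p' := by linarith
  -- rewrite the two factors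
  have f1 : ∀ y : ℝ, gauss (q'/p) y ^ ((1:ℝ)/p)
      = (2*π*(q'/p)) ^ (-(1:ℝ)/(2*p)) * Real.exp (-y^2/(2*q')) := by
    intro y
    have h : 2*(q'/p)*p = 2*q' := by field_simp
    rw [gauss_rpow _ _ (by positivity) hp0, h]
  have f2 : ∀ y : ℝ, gauss (p'/q) y ^ ((1:ℝ)/q)
      = (2*π*(p'/q)) ^ (-(1:ℝ)/(2*q)) * Real.exp (-y^2/(2*p')) := by
    intro y
    have h : 2*(p'/q)*q = 2*p' := by field_simp
    rw [gauss_rpow _ _ (by positivity) hq0, h]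
  have hconv : ∀ x : ℝ, conv (fun y => gauss (q'/p) y ^ ((1:ℝ)/p))
      (fun y => gauss (p'/q) y ^ ((1:ℝ)/q)) x
      = ((2*π*(q'/p)) ^ (-(1:ℝ)/(2*p)) * (2*π*(p'/q)) ^ (-(1:ℝ)/(2*q)) *
          Real.sqrt (2*π*q'*p'/(q'+p'))) * Real.exp (-x^2 / (2*(q'+p'))) := by
    intro x
    unfold conv
    have key : ∀ y : ℝ, (gauss (q'/p) (x-y) ^ ((1:ℝ)/p)) * (gauss (p'/q) y ^ ((1:ℝ)/q))
        = ((2*π*(q'/p)) ^ (-(1:ℝ)/(2*p)) * (2*π*(p'/q)) ^ (-(1:ℝ)/(2*q))) *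
          (Real.exp (-(x-y)^2/(2*q')) * Real.exp (-y^2/(2*p'))) := by
      intro y; rw [f1, f2]; ring
    simp only [key]
    rw [integral_const_mul, gaussian_conv q' p' hq'0 hp'0 x]
    ring
  have hK : (0:ℝ) < (2*π*(q'/p)) ^ (-(1:ℝ)/(2*p)) * (2*π*(p'/q)) ^ (-(1:ℝ)/(2*q)) *
      Real.sqrt (2*π*q'*p'/(q'+p')) := by
    have h1 : (0:ℝ) < 2*π*q'*p'/(q'+p') := by positivity
    have h2 := Real.sqrt_pos.mpr h1
    positivity
  have hint : (∫ x, conv (fun y => gauss (q'/p) y ^ ((1:ℝ)/p))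
      (fun y => gauss (p'/q) y ^ ((1:ℝ)/q)) x ^ r)
      = ((2*π*(q'/p)) ^ (-(1:ℝ)/(2*p)) * (2*π*(p'/q)) ^ (-(1:ℝ)/(2*q)) *
          Real.sqrt (2*π*q'*p'/(q'+p'))) ^ r * Real.sqrt (π / (r/(2*(q'+p')))) := by
    have h1 : ∀ x : ℝ, conv (fun y => gauss (q'/p) y ^ ((1:ℝ)/p))
        (fun y => gauss (p'/q) y ^ ((1:ℝ)/q)) x ^ r
        = ((2*π*(q'/p)) ^ (-(1:ℝ)/(2*p)) * (2*π*(p'/q)) ^ (-(1:ℝ)/(2*q)) *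
            Real.sqrt (2*π*q'*p'/(q'+p'))) ^ r * Real.exp (-(r/(2*(q'+p'))) * x^2) := by
      intro x
      rw [hconv x, Real.mul_rpow hK.le (Real.exp_pos _).le, ← Real.exp_mul]
      congr 2
      field_simp
    simp only [h1]
    rw [integral_const_mul, integral_gaussian]
  rw [hint]
  -- simplify the two sqrt/rpow factors
  have hv1 : Real.sqrt (2*π*q'*p'/(q'+p')) = (2*π*r') ^ ((1:ℝ)/2) := by
    rw [Real.sqrt_eq_rpow]
    congr 1
    rw [hseq, div_div_eq_mul_div, div_eq_iff (by positivity : (p'*q' : ℝ) ≠ 0)]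
    ring
  have hv2 : Real.sqrt (π / (r/(2*(q'+p')))) = (2*π*(p'*q'/(r'*r))) ^ ((1:ℝ)/2) := by
    rw [Real.sqrt_eq_rpow]
    congr 1
    rw [hseq, div_div_eq_mul_div, div_eq_iff (by positivity : (r:ℝ) ≠ 0)]
    field_simp
  rw [hv1, hv2]
  -- take rpows apart
  have hB1 : (0:ℝ) < (2*π*(q'/p)) ^ (-(1:ℝ)/(2*p)) := by positivity
  have hB2 : (0:ℝ) < (2*π*(p'/q)) ^ (-(1:ℝ)/(2*q)) := by positivity
  have hB3 : (0:ℝ) < (2*π*r') ^ ((1:ℝ)/2) := by positivity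
  have hB4 : (0:ℝ) < (2*π*(p'*q'/(r'*r))) ^ ((1:ℝ)/2) := by positivity
  have hKpos : (0:ℝ) < (2*π*(q'/p)) ^ (-(1:ℝ)/(2*p)) * (2*π*(p'/q)) ^ (-(1:ℝ)/(2*q)) *
      (2*π*r') ^ ((1:ℝ)/2) := by positivity
  rw [Real.mul_rpow (by positivity) (by positivity), ← Real.rpow_mul hKpos.le,
      mul_one_div_cancel hr0.ne', Real.rpow_one, ← Real.rpow_mul (by positivity : (0:ℝ) ≤ 2*π*(p'*q'/(r'*r)))]
  -- now prove equality of positive reals via log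
  have h2π : (0:ℝ) < 2*π := by positivity
  simp only [sharpA]
  apply Real.log_injOn_pos (Set.mem_Ioi.mpr (by positivity)) (Set.mem_Ioi.mpr (by positivity))
  have L1 : Real.log ((2*π*(q'/p)) ^ (-(1:ℝ)/(2*p)))
      = (-(1:ℝ)/(2*p)) * (Real.log (2*π) + (Real.log q' - Real.log p)) := by
    rw [Real.log_rpow (by positivity), Real.log_mul h2π.ne' (by positivity : (0:ℝ) < q'/p).ne',
        Real.log_div hq'0.ne' hp0.ne']
  have L2 : Real.log ((2*π*(p'/q)) ^ (-(1:ℝ)/(2*q)))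
      = (-(1:ℝ)/(2*q)) * (Real.log (2*π) + (Real.log p' - Real.log q)) := by
    rw [Real.log_rpow (by positivity), Real.log_mul h2π.ne' (by positivity : (0:ℝ) < p'/q).ne',
        Real.log_div hp'0.ne' hq0.ne']
  have L3 : Real.log ((2*π*r') ^ ((1:ℝ)/2))
      = ((1:ℝ)/2) * (Real.log (2*π) + Real.log r') := by
    rw [Real.log_rpow (by positivity), Real.log_mul h2π.ne' hr'0.ne']
  have L4 : Real.log ((2*π*(p'*q'/(r'*r))) ^ ((1:ℝ)/2 * (1/r)))
      = ((1:ℝ)/2 * (1/r)) * (Real.log (2*π) + (Real.log p' + Real.log q'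
          - (Real.log r' + Real.log r))) := by
    rw [Real.log_rpow (by positivity), Real.log_mul h2π.ne' (by positivity : (0:ℝ) < p'*q'/(r'*r)).ne',
        Real.log_div (by positivity : (p'*q':ℝ) ≠ 0) (by positivity : (r'*r:ℝ) ≠ 0),
        Real.log_mul hp'0.ne' hq'0.ne', Real.log_mul hr'0.ne' hr0.ne']
  have R1 : Real.log ((p ^ ((1:ℝ)/p) / p' ^ ((1:ℝ)/p')) ^ ((1:ℝ)/2))
      = ((1:ℝ)/2) * ((1/p) * Real.log p - (1/p') * Real.log p') := by
    rw [Real.log_rpow (by positivity), Real.log_div (by positivity) (by positivity),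
        Real.log_rpow hp0, Real.log_rpow hp'0]
  have R2 : Real.log ((q ^ ((1:ℝ)/q) / q' ^ ((1:ℝ)/q')) ^ ((1:ℝ)/2))
      = ((1:ℝ)/2) * ((1/q) * Real.log q - (1/q') * Real.log q') := by
    rw [Real.log_rpow (by positivity), Real.log_div (by positivity) (by positivity),
        Real.log_rpow hq0, Real.log_rpow hq'0]
  have R3 : Real.log ((r' ^ ((1:ℝ)/r') / r ^ ((1:ℝ)/r)) ^ ((1:ℝ)/2))
      = ((1:ℝ)/2) * ((1/r') * Real.log r' - (1/r) * Real.log r) := by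
    rw [Real.log_rpow (by positivity), Real.log_div (by positivity) (by positivity),
        Real.log_rpow hr'0, Real.log_rpow hr0]
  rw [Real.log_mul (by positivity) (by positivity), Real.log_mul (by positivity) (by positivity),
      Real.log_mul (by positivity) (by positivity), Real.log_mul (by positivity) (by positivity),
      Real.log_mul (by positivity) (by positivity)]
  rw [L1, L2, L3, L4, R1, R2, R3]
  linear_combination (-(Real.log (2*π))/2) * hpqr + ((Real.log q')/2) * e1
    + ((Real.log p')/2) * e2 + (-(Real.log r')/2) * e3
end
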